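/- Let B be a commutative Noetherian ring and let s, t ∈ B be such that Bs + Bt = B. Let I, L be ideals of B with L ⊆ I², and let P be a finitely generated projective B-module with an B-linear surjection φ : P →→ I/L. If the induced map φ ⊗ B_t can be lifted to a B_t-linear map Φ : P_t → B_t with image I_t, then there exists a B-linear map Ψ : P → B with Ψ(P) ⊆ I and Ψ(P) + sL = I, such that the composite of Ψ with the canonical map I → I/L equals φ (that is, φ lifts to a surjection P →→ I/(sL)). -/

import Mathlib

open Polynomial TensorProduct

/-- The height of an ideal: the infimum of the heights of the prime ideals containing it. -/
noncomputable def idealHeight {R : Type*} [CommRing R] (I : Ideal R) : ℕ∞ :=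
  ⨅ (p : PrimeSpectrum R) (_ : I ≤ p.asIdeal), Order.height p

/-- A module over `A` has rank `n` if its localization at every prime ideal of `A`
is free of rank `n`. -/
def HasRankN (A : Type*) [CommRing A] (P : Type*) [AddCommGroup P] [Module A P] (n : ℕ) : Prop :=
  ∀ p : PrimeSpectrum A,
    Nonempty (Module.Basis (Fin n) (Localization.AtPrime p.asIdeal)
      (LocalizedModule p.asIdeal.primeCompl P))

/-- A (Noetherian) commutative ring is regular if each localization at a prime is a regular
local ring, i.e. its maximal ideal is generated by (Krull dimension)-many elements. -/
def IsRegularRing' (A : Type*) [CommRing A] : Prop :=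
  ∀ p : PrimeSpectrum A,
    ∃ s : Finset (Localization.AtPrime p.asIdeal),
      Ideal.span (s : Set (Localization.AtPrime p.asIdeal))
        = IsLocalRing.maximalIdeal (Localization.AtPrime p.asIdeal) ∧
      (s.card : WithBot ℕ∞) = ringKrullDim (Localization.AtPrime p.asIdeal)

theorem lift_away_from_s
    (B : Type) [CommRing B] [IsNoetherianRing B]
    (s t : B) (hst : Ideal.span {s} ⊔ Ideal.span {t} = ⊤)
    (I L : Ideal B) (hL : L ≤ I ^ 2)
    (P : Type) [AddCommGroup P] [Module B P] [Module.Finite B P] [Module.Projective B P]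
    (φ : P →ₗ[B] (↥I ⧸ Submodule.comap I.subtype (L : Submodule B B)))
    (hφ : Function.Surjective φ)
    (Φ : LocalizedModule (Submonoid.powers t) P
      →ₗ[Localization (Submonoid.powers t)] Localization (Submonoid.powers t))
    (hrange : LinearMap.range Φ
      = Ideal.map (algebraMap B (Localization (Submonoid.powers t))) I)
    (hlift : ∀ (x : P) (y : ↥I), φ x = Submodule.Quotient.mk y →
      Φ (LocalizedModule.mk x 1)
          - algebraMap B (Localization (Submonoid.powers t)) (y : B)
        ∈ Ideal.map (algebraMap B (Localization (Submonoid.powers t))) L) :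
    ∃ (Ψ : P →ₗ[B] B) (hmem : ∀ x, Ψ x ∈ I),
      LinearMap.range Ψ ⊔ (Ideal.span {s} * L) = I ∧
      ∀ x, φ x = Submodule.Quotient.mk ⟨Ψ x, hmem x⟩ := by
  classical
  have hLI : L ≤ I := le_trans hL (Ideal.pow_le_self two_ne_zero)
  -- Step 1: lift φ to a map Ψ₀ : P → ↥I using projectivity
  obtain ⟨Ψ₀, hΨ₀⟩ := Module.projective_lifting_property
    (Submodule.mkQ (Submodule.comap I.subtype (L : Submodule B B))) φ
    (Submodule.mkQ_surjective _)
  have hφ₀ : ∀ x : P, φ x = Submodule.Quotient.mk (Ψ₀ x) := by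
    intro x; rw [← hΨ₀]; rfl
  -- Step 2: the defect map D
  set D : P →ₗ[B] Localization (Submonoid.powers t) :=
    (Φ.restrictScalars B).comp (LocalizedModule.mkLinearMap (Submonoid.powers t) P)
      - (Algebra.linearMap B _).comp (I.subtype.comp Ψ₀) with hD
  have hDx : ∀ x : P, D x = Φ (LocalizedModule.mk x 1)
      - algebraMap B (Localization (Submonoid.powers t)) (Ψ₀ x : B) := fun x => rfl
  set M₀ : Submodule B (Localization (Submonoid.powers t)) :=
    Submodule.map (Algebra.linearMap B (Localization (Submonoid.powers t)))
      (L : Submodule B B) with hM₀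
  have hDmem : ∀ x : P, ∃ n : ℕ, t ^ n • D x ∈ M₀ := by
    intro x
    have hx := hlift x (Ψ₀ x) (hφ₀ x)
    rw [IsLocalization.mem_map_algebraMap_iff (Submonoid.powers t)] at hx
    obtain ⟨⟨⟨l, hl⟩, u⟩, hu⟩ := hx
    obtain ⟨n, hn⟩ := u.2
    rw [← hn] at hu
    refine ⟨n, ⟨l, hl, ?_⟩⟩
    rw [Algebra.linearMap_apply, hDx, Algebra.smul_def, mul_comm]
    exact hu.symm
  -- Step 3: a uniform exponent N ≥ 1
  obtain ⟨G, hG⟩ := Module.Finite.fg_top (R := B) (M := P)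
  choose nf hnf using hDmem
  set N : ℕ := G.sup nf + 1 with hNdef
  have hNpos : 1 ≤ N := Nat.le_add_left 1 _
  have hNx : ∀ x : P, t ^ N • D x ∈ M₀ := by
    have hle : Submodule.span B (G : Set P)
        ≤ Submodule.comap
          ((LinearMap.lsmul B (Localization (Submonoid.powers t)) (t ^ N)).comp D) M₀ := by
      rw [Submodule.span_le]
      intro g hg
      simp only [SetLike.mem_coe, Submodule.mem_comap, LinearMap.comp_apply,
        LinearMap.lsmul_apply]
      have h1 : nf g ≤ N := le_trans (Finset.le_sup hg) (Nat.le_succ _)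
      have h2 : t ^ N • D g = t ^ (N - nf g) • (t ^ nf g • D g) := by
        rw [← mul_smul, ← pow_add, Nat.sub_add_cancel h1]
      rw [h2]
      exact Submodule.smul_mem _ _ (hnf g)
    intro x
    have hx : x ∈ Submodule.span B (G : Set P) := by rw [hG]; exact Submodule.mem_top
    exact hle hx
  -- Step 4: lift to θ : P → ↥L using projectivity
  have hres : ∀ y ∈ (L : Submodule B B),
      Algebra.linearMap B (Localization (Submonoid.powers t)) y ∈ M₀ :=
    fun y hy => Submodule.mem_map_of_mem hy
  have hsurj : Function.Surjective
      ((Algebra.linearMap B (Localization (Submonoid.powers t))).restrict hres) := by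
    rintro ⟨z, hz⟩
    obtain ⟨l, hl, hlz⟩ := hz
    exact ⟨⟨l, hl⟩, Subtype.ext hlz⟩
  obtain ⟨θ, hθ⟩ := Module.projective_lifting_property
    ((Algebra.linearMap B (Localization (Submonoid.powers t))).restrict hres)
    (LinearMap.codRestrict M₀
      ((LinearMap.lsmul B (Localization (Submonoid.powers t)) (t ^ N)).comp D) hNx) hsurj
  have hθx : ∀ x : P, algebraMap B (Localization (Submonoid.powers t)) (θ x : B)
      = t ^ N • D x := by
    intro x
    exact congrArg Subtype.val (LinearMap.congr_fun hθ x)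
  -- Step 5: coprimality
  have hco : IsCoprime s (t ^ N) :=
    ((Ideal.isCoprime_span_singleton_iff s t).mp
      (Ideal.isCoprime_iff_sup_eq.mpr hst)).pow_right
  obtain ⟨a, c, hac⟩ := hco
  -- Step 6: the lift Ψ
  set Ψ : P →ₗ[B] B := I.subtype.comp Ψ₀ + c • (L.subtype.comp θ) with hΨdef
  have hΨx : ∀ x : P, Ψ x = (Ψ₀ x : B) + c * (θ x : B) := by
    intro x
    simp [hΨdef, smul_eq_mul]
  have hmem : ∀ x : P, Ψ x ∈ I := by
    intro x
    rw [hΨx]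
    exact I.add_mem (Ψ₀ x).2 (Ideal.mul_mem_left _ c (hLI (θ x).2))
  set J : Ideal B := LinearMap.range Ψ ⊔ Ideal.span {s} * L with hJ
  have hJI : J ≤ I := by
    apply sup_le
    · rintro y ⟨x, rfl⟩
      exact hmem x
    · exact le_trans Ideal.mul_le_right hLI
  -- Step 7: elementwise t-power membership in J
  have hkey : ∀ i ∈ I, ∃ m : ℕ, t ^ m * i ∈ J := by
    intro i hi
    have h1 : algebraMap B (Localization (Submonoid.powers t)) i ∈ LinearMap.range Φ := by
      rw [hrange]; exact Ideal.mem_map_of_mem _ hi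
    obtain ⟨p, hp⟩ := h1
    revert hp
    induction p using LocalizedModule.induction_on with
    | _ x u =>
      intro hp
      obtain ⟨k, hk⟩ := u.2
      have e1 : Φ (LocalizedModule.mk x 1)
          = algebraMap B (Localization (Submonoid.powers t)) ((u : B) * i) := by
        have hm1 : LocalizedModule.mk x (1 : Submonoid.powers t)
            = (u : B) • LocalizedModule.mk x u := by
          rw [LocalizedModule.smul'_mk]
          exact (LocalizedModule.mk_cancel u x).symm
        rw [hm1, LinearMap.map_smul_of_tower, hp, Algebra.smul_def, ← map_mul]
      have e2 : algebraMap B (Localization (Submonoid.powers t)) (t ^ N * ((u : B) * i))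
          = algebraMap B (Localization (Submonoid.powers t))
              (t ^ N * (Ψ₀ x : B) + (θ x : B)) := by
        calc algebraMap B (Localization (Submonoid.powers t)) (t ^ N * ((u : B) * i))
            = t ^ N • Φ (LocalizedModule.mk x 1) := by
              rw [map_mul, e1, Algebra.smul_def]
          _ = t ^ N • (algebraMap B (Localization (Submonoid.powers t)) (Ψ₀ x : B) + D x) := by
              rw [hDx]; congr 1; ring
          _ = t ^ N • algebraMap B (Localization (Submonoid.powers t)) (Ψ₀ x : B)
                + algebraMap B (Localization (Submonoid.powers t)) (θ x : B) := by
              rw [smul_add, hθx]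
          _ = _ := by
              rw [map_add, map_mul, ← Algebra.smul_def]
      obtain ⟨v, hv⟩ := (IsLocalization.eq_iff_exists (Submonoid.powers t)
        (Localization (Submonoid.powers t))).mp e2
      obtain ⟨m, hm⟩ := v.2
      refine ⟨m + N + k, ?_⟩
      have hw : t ^ N * (Ψ₀ x : B) + (θ x : B) ∈ J := by
        have hrw : t ^ N * (Ψ₀ x : B) + (θ x : B)
            = Ψ (t ^ N • x) + a * (s * (θ x : B)) := by
          rw [map_smul, smul_eq_mul, hΨx]
          linear_combination (-(θ x : B)) * hac
        rw [hrw]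
        refine J.add_mem (Submodule.mem_sup_left (LinearMap.mem_range_self Ψ _)) ?_
        exact Submodule.mem_sup_right
          (Ideal.mul_mem_left _ a (Ideal.mul_mem_mul (Ideal.mem_span_singleton_self s) (θ x).2))
      have ht : t ^ (m + N + k) * i = (v : B) * (t ^ N * ((u : B) * i)) := by
        rw [← hm, ← hk]; ring
      rw [ht, hv]
      exact Ideal.mul_mem_left _ _ hw
  -- Step 8: uniform M by Noetherian stabilization
  set C : ℕ →o Submodule B B :=
    ⟨fun n => Submodule.comap (LinearMap.lsmul B B (t ^ n)) (J : Submodule B B), by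
      intro n m hnm b hb
      simp only [Submodule.mem_comap, LinearMap.lsmul_apply, smul_eq_mul] at hb ⊢
      have h2 : t ^ m * b = t ^ (m - n) * (t ^ n * b) := by
        rw [← mul_assoc, ← pow_add, Nat.sub_add_cancel hnm]
      rw [h2]
      exact Ideal.mul_mem_left _ _ hb⟩ with hC
  obtain ⟨M, hM⟩ := (monotone_stabilizes_iff_noetherian.mpr
    (inferInstance : IsNoetherian B B)) C
  have huni : ∀ i ∈ I, t ^ M * i ∈ J := by
    intro i hi
    obtain ⟨m, hm⟩ := hkey i hi
    have h1 : i ∈ C (max m M) := by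
      change t ^ max m M * i ∈ J
      have h2 : t ^ max m M * i = t ^ (max m M - m) * (t ^ m * i) := by
        rw [← mul_assoc, ← pow_add, Nat.sub_add_cancel (le_max_left _ _)]
      rw [h2]
      exact Ideal.mul_mem_left _ _ hm
    rw [← hM (max m M) (le_max_right _ _)] at h1
    exact h1
  -- Step 9: I ≤ J + (c t^N)·L, elementwise
  have hstep : ∀ i ∈ I, ∃ j ∈ J, ∃ l ∈ L, i = j + (c * t ^ N) * l := by
    intro i hi
    obtain ⟨x, hx⟩ := hφ (Submodule.Quotient.mk ⟨i, hi⟩)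
    have hdiff : Ψ₀ x - ⟨i, hi⟩ ∈ Submodule.comap I.subtype (L : Submodule B B) :=
      (Submodule.Quotient.eq _).mp ((hφ₀ x).symm.trans hx)
    have hl1 : (Ψ₀ x : B) - i ∈ L := by
      have := Submodule.mem_comap.mp hdiff
      simpa using this
    have hlmem : (i - (Ψ₀ x : B)) - c * (θ x : B) ∈ L :=
      L.sub_mem (by simpa using L.neg_mem hl1) (Ideal.mul_mem_left _ c (θ x).2)
    refine ⟨Ψ x + a * (s * ((i - (Ψ₀ x : B)) - c * (θ x : B))), ?_,
      (i - (Ψ₀ x : B)) - c * (θ x : B), hlmem, ?_⟩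
    · refine J.add_mem (Submodule.mem_sup_left (LinearMap.mem_range_self Ψ _)) ?_
      exact Submodule.mem_sup_right
        (Ideal.mul_mem_left _ a (Ideal.mul_mem_mul (Ideal.mem_span_singleton_self s) hlmem))
    · have h3 := hΨx x
      linear_combination (-1 : B) * h3 - ((i - (Ψ₀ x : B)) - c * (θ x : B)) * hac
  -- Step 10: iterate
  have hiter : ∀ k : ℕ, ∀ i ∈ I, ∃ j ∈ J, ∃ l ∈ L, i = j + (c * t ^ N) ^ (k + 1) * l := by
    intro k
    induction k with
    | zero =>
      intro i hi
      obtain ⟨j, hj, l, hl, he⟩ := hstep i hi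
      exact ⟨j, hj, l, hl, by rw [pow_one]; exact he⟩
    | succ k ih =>
      intro i hi
      obtain ⟨j, hj, l, hl, he⟩ := ih i hi
      obtain ⟨j', hj', l', hl', he'⟩ := hstep l (hLI hl)
      refine ⟨j + (c * t ^ N) ^ (k + 1) * j', J.add_mem hj (Ideal.mul_mem_left _ _ hj'),
        l', hl', ?_⟩
      rw [he, he']; ring
  -- Step 11: conclude I ≤ J
  have hIJ : I ≤ J := by
    intro i hi
    obtain ⟨j, hj, l, hl, he⟩ := hiter M i hi
    have htl : t ^ M * l ∈ J := huni l (hLI hl)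
    have hge : M ≤ N * (M + 1) :=
      le_trans (Nat.le_succ M) (Nat.le_mul_of_pos_left (M + 1) hNpos)
    have hsplit : (t : B) ^ (N * (M + 1)) = t ^ (N * (M + 1) - M) * t ^ M := by
      rw [← pow_add, Nat.sub_add_cancel hge]
    have he2 : i = j + (c ^ (M + 1) * t ^ (N * (M + 1) - M)) * (t ^ M * l) := by
      rw [he, mul_pow, ← pow_mul, hsplit]; ring
    rw [he2]
    exact J.add_mem hj (Ideal.mul_mem_left _ _ htl)
  refine ⟨Ψ, hmem, le_antisymm hJI hIJ, ?_⟩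
  intro x
  rw [hφ₀ x]
  refine (Submodule.Quotient.eq _).mpr ?_
  refine Submodule.mem_comap.mpr ?_
  have h4 : I.subtype (Ψ₀ x - ⟨Ψ x, hmem x⟩) = -(c * (θ x : B)) := by
    simp only [map_sub, Submodule.coe_subtype]
    rw [hΨx]; ring
  rw [h4]
  exact L.neg_mem (Ideal.mul_mem_left _ c (θ x).2)
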